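/- Let G be a finite simple graph with vertex set V of size n and let C ⊆ V be a vertex cover of G. Then there exists an optimal linear arrangement σ of G (a bijection σ : V → {1,…,n} minimizing val(σ,G) = Σ_{uv ∈ E(G)} |σ(u) − σ(v)| over all bijections) that is homogeneous with respect to C. -/

import Mathlib

open Finset

/-- The cost `val(σ, G) = Σ_{uv ∈ E(G)} |σ(u) - σ(v)|` of a linear arrangement `σ`. -/
def arrCost {V : Type*} [Fintype V] [DecidableEq V] (G : SimpleGraph V)
    [DecidableRel G.Adj] (σ : V ≃ Fin (Fintype.card V)) : ℤ :=
  ∑ e ∈ G.edgeFinset,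
    Sym2.lift ⟨fun u v => |((σ u : ℕ) : ℤ) - ((σ v : ℕ) : ℤ)|,
      fun u v => by dsimp only; rw [abs_sub_comm]⟩ e

/-- `σ` is homogeneous with respect to a vertex cover `C`: whenever `u, v, w ∉ C` satisfy
`σ u < σ v < σ w`, `u` and `w` have the same type (neighborhood) and lie in the same gap
(no vertex of `C` is placed strictly between them), then `v` also has that type. -/
def Homogeneous {V : Type*} [Fintype V] (G : SimpleGraph V) (C : Set V)
    (σ : V ≃ Fin (Fintype.card V)) : Prop :=
  ∀ u v w : V, u ∉ C → v ∉ C → w ∉ C → σ u < σ v → σ v < σ w →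
    G.neighborSet u = G.neighborSet w →
    (∀ c ∈ C, ¬ (σ u < σ c ∧ σ c < σ w)) →
    G.neighborSet v = G.neighborSet u


namespace Stmt11

variable {V : Type*} [Fintype V] [DecidableEq V]

/-- edge length -/
def elen (σ : V ≃ Fin (Fintype.card V)) : Sym2 V → ℤ :=
  Sym2.lift ⟨fun u v => |((σ u : ℕ) : ℤ) - ((σ v : ℕ) : ℤ)|,
    fun u v => by dsimp only; rw [abs_sub_comm]⟩

lemma elen_mk (σ : V ≃ Fin (Fintype.card V)) (x y : V) :
    elen σ s(x, y) = |((σ x : ℕ) : ℤ) - ((σ y : ℕ) : ℤ)| := rfl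

variable (G : SimpleGraph V) [DecidableRel G.Adj]

lemma arrCost_def (σ : V ≃ Fin (Fintype.card V)) :
    arrCost G σ = ∑ e ∈ G.edgeFinset, elen σ e := rfl

lemma filter_mem_eq_image (a : V) :
    G.edgeFinset.filter (fun e => a ∈ e) = (G.neighborFinset a).image (fun c => s(a, c)) := by
  ext e
  simp only [mem_filter, mem_image, SimpleGraph.mem_neighborFinset, SimpleGraph.mem_edgeFinset]
  constructor
  · rintro ⟨he, ha⟩
    induction e using Sym2.ind with
    | _ x y =>
      rw [Sym2.mem_iff] at ha
      rw [SimpleGraph.mem_edgeSet] at he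
      rcases ha with rfl | rfl
      · exact ⟨y, he, rfl⟩
      · exact ⟨x, he.symm, Sym2.eq_swap⟩
  · rintro ⟨c, hc, rfl⟩
    exact ⟨G.mem_edgeSet.mpr hc, Sym2.mem_mk_left a c⟩

lemma sum_filter_mem (a : V) (f : Sym2 V → ℤ) :
    ∑ e ∈ G.edgeFinset.filter (fun e => a ∈ e), f e
      = ∑ c ∈ G.neighborFinset a, f s(a, c) := by
  rw [filter_mem_eq_image, Finset.sum_image]
  intro c _ d _ h
  exact Sym2.congr_right.mp h

lemma elen_swap_notmem (σ : V ≃ Fin (Fintype.card V)) (a b : V) (e : Sym2 V)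
    (ha : a ∉ e) (hb : b ∉ e) :
    elen ((Equiv.swap a b).trans σ) e = elen σ e := by
  induction e using Sym2.ind with
  | _ x y =>
    simp only [Sym2.mem_iff, not_or] at ha hb
    rw [elen_mk, elen_mk]
    simp only [Equiv.trans_apply,
      Equiv.swap_apply_of_ne_of_ne (Ne.symm ha.1) (Ne.symm hb.1),
      Equiv.swap_apply_of_ne_of_ne (Ne.symm ha.2) (Ne.symm hb.2)]



set_option linter.unusedSectionVars false

variable {V : Type*} [Fintype V] [DecidableEq V] (G : SimpleGraph V) [DecidableRel G.Adj]

lemma arrCost_swap (σ : V ≃ Fin (Fintype.card V)) {a b : V} (hab : a ≠ b)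
    (hnadj : ¬ G.Adj a b) :
    arrCost G ((Equiv.swap a b).trans σ)
      = arrCost G σ
        + ∑ c ∈ G.neighborFinset a,
            (|((σ b : ℕ) : ℤ) - ((σ c : ℕ) : ℤ)| - |((σ a : ℕ) : ℤ) - ((σ c : ℕ) : ℤ)|)
        + ∑ c ∈ G.neighborFinset b,
            (|((σ a : ℕ) : ℤ) - ((σ c : ℕ) : ℤ)| - |((σ b : ℕ) : ℤ) - ((σ c : ℕ) : ℤ)|) := by
  have hsplit : ∀ τ : V ≃ Fin (Fintype.card V),
      arrCost G τ = (∑ e ∈ G.edgeFinset.filter (fun e => a ∈ e), elen τ e)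
        + (∑ e ∈ G.edgeFinset.filter (fun e => b ∈ e), elen τ e)
        + (∑ e ∈ G.edgeFinset.filter (fun e => a ∉ e ∧ b ∉ e), elen τ e) := by
    intro τ
    rw [arrCost_def, ← Finset.sum_filter_add_sum_filter_not G.edgeFinset (fun e => a ∈ e),
      add_assoc]
    congr 1
    rw [← Finset.sum_filter_add_sum_filter_not (G.edgeFinset.filter (fun e => a ∉ e))
      (fun e => b ∈ e), Finset.filter_filter, Finset.filter_filter]
    congr 1
    · apply Finset.sum_congr _ (fun _ _ => rfl)
      apply Finset.filter_congr
      intro e he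
      constructor
      · exact fun h => h.2
      · intro hb
        refine ⟨fun ha => hnadj ?_, hb⟩
        exact G.mem_edgeSet.mp (SimpleGraph.mem_edgeFinset.mp (by
          rwa [(Sym2.mem_and_mem_iff hab).mp ⟨ha, hb⟩] at he))
  have hca : ∀ c ∈ G.neighborFinset a, c ≠ a ∧ c ≠ b := by
    intro c hc
    rw [SimpleGraph.mem_neighborFinset] at hc
    exact ⟨fun h => G.loopless.irrefl a (h ▸ hc), fun h => hnadj (h ▸ hc)⟩
  have hcb : ∀ c ∈ G.neighborFinset b, c ≠ a ∧ c ≠ b := by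
    intro c hc
    rw [SimpleGraph.mem_neighborFinset] at hc
    exact ⟨fun h => hnadj (h ▸ hc.symm), fun h => G.loopless.irrefl b (h ▸ hc)⟩
  rw [hsplit, hsplit, sum_filter_mem, sum_filter_mem, sum_filter_mem, sum_filter_mem]
  have h3 : ∑ e ∈ G.edgeFinset.filter (fun e => a ∉ e ∧ b ∉ e),
      elen ((Equiv.swap a b).trans σ) e
      = ∑ e ∈ G.edgeFinset.filter (fun e => a ∉ e ∧ b ∉ e), elen σ e := by
    apply Finset.sum_congr rfl
    intro e he
    rw [Finset.mem_filter] at he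
    exact elen_swap_notmem σ a b e he.2.1 he.2.2
  have h1 : ∑ c ∈ G.neighborFinset a, elen ((Equiv.swap a b).trans σ) s(a, c)
      = ∑ c ∈ G.neighborFinset a, |((σ b : ℕ) : ℤ) - ((σ c : ℕ) : ℤ)| := by
    apply Finset.sum_congr rfl
    intro c hc
    rw [elen_mk]
    simp only [Equiv.trans_apply, Equiv.swap_apply_left,
      Equiv.swap_apply_of_ne_of_ne (hca c hc).1 (hca c hc).2]
  have h2 : ∑ c ∈ G.neighborFinset b, elen ((Equiv.swap a b).trans σ) s(b, c)
      = ∑ c ∈ G.neighborFinset b, |((σ a : ℕ) : ℤ) - ((σ c : ℕ) : ℤ)| := by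
    apply Finset.sum_congr rfl
    intro c hc
    rw [elen_mk]
    simp only [Equiv.trans_apply, Equiv.swap_apply_right,
      Equiv.swap_apply_of_ne_of_ne (hcb c hc).1 (hcb c hc).2]
  rw [h1, h2, h3]
  simp only [elen_mk]
  rw [Finset.sum_sub_distrib, Finset.sum_sub_distrib]
  ring



set_option linter.unusedSectionVars false

variable {V : Type*} [Fintype V] [DecidableEq V] (G : SimpleGraph V) [DecidableRel G.Adj]

/-- an injective integer labelling of finsets of vertices -/
noncomputable def tval (S : Finset V) : ℤ := ((Fintype.equivFin (Finset V)) S : ℕ)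

lemma tval_injective : Function.Injective (tval (V := V)) := by
  intro S T h
  unfold tval at h
  exact (Fintype.equivFin (Finset V)).injective (Fin.ext (by exact_mod_cast h))

/-- secondary potential -/
noncomputable def Phi (σ : V ≃ Fin (Fintype.card V)) : ℤ :=
  ∑ x : V, ((σ x : ℕ) : ℤ) * tval (G.neighborFinset x)

lemma Phi_swap (σ : V ≃ Fin (Fintype.card V)) {a b : V} (hab : a ≠ b) :
    Phi G ((Equiv.swap a b).trans σ)
      = Phi G σ + (((σ b : ℕ) : ℤ) - ((σ a : ℕ) : ℤ))
          * (tval (G.neighborFinset a) - tval (G.neighborFinset b)) := by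
  have hre : Phi G ((Equiv.swap a b).trans σ)
      = ∑ x : V, ((σ x : ℕ) : ℤ) * tval (G.neighborFinset ((Equiv.swap a b) x)) := by
    rw [Phi]
    apply Fintype.sum_equiv (Equiv.swap a b)
    intro x
    rw [Equiv.trans_apply, Equiv.swap_apply_self]
  rw [hre, Phi]
  have hdiff : ∀ x : V, x ≠ a → x ≠ b →
      ((σ x : ℕ) : ℤ) * tval (G.neighborFinset ((Equiv.swap a b) x))
        = ((σ x : ℕ) : ℤ) * tval (G.neighborFinset x) := by
    intro x hx1 hx2
    rw [Equiv.swap_apply_of_ne_of_ne hx1 hx2]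
  rw [← Finset.sum_compl_add_sum ({a, b} : Finset V), ← Finset.sum_compl_add_sum ({a, b} : Finset V)
    (fun x => ((σ x : ℕ) : ℤ) * tval (G.neighborFinset x))]
  have h1 : ∑ x ∈ ({a, b} : Finset V)ᶜ, ((σ x : ℕ) : ℤ) * tval (G.neighborFinset ((Equiv.swap a b) x))
      = ∑ x ∈ ({a, b} : Finset V)ᶜ, ((σ x : ℕ) : ℤ) * tval (G.neighborFinset x) := by
    apply Finset.sum_congr rfl
    intro x hx
    simp only [Finset.mem_compl, Finset.mem_insert, Finset.mem_singleton, not_or] at hx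
    exact hdiff x hx.1 hx.2
  rw [h1, Finset.sum_pair hab, Finset.sum_pair hab, Equiv.swap_apply_left, Equiv.swap_apply_right]
  ring

/-- difference of distances when a position moves one step right -/
lemma abs_step (p z : ℤ) (h : z < p ∨ p + 1 < z) :
    |p + 1 - z| - |p - z| = if z < p then 1 else -1 := by
  rcases h with h | h
  · rw [if_pos h, abs_of_pos (by linarith), abs_of_pos (by linarith)]
    ring
  · rw [if_neg (by linarith), abs_of_neg (by linarith), abs_of_neg (by linarith)]
    ring

end Stmt11

theorem stmt_11 {V : Type*} [Fintype V] [DecidableEq V]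
    (G : SimpleGraph V) [DecidableRel G.Adj]
    (C : Set V) (hC : ∀ u v : V, G.Adj u v → u ∈ C ∨ v ∈ C) :
    ∃ σ : V ≃ Fin (Fintype.card V),
      (∀ τ : V ≃ Fin (Fintype.card V), arrCost G σ ≤ arrCost G τ) ∧
      Homogeneous G C σ := by
  classical
  obtain ⟨σ0, -, hσ0⟩ := Finset.exists_min_image (Finset.univ : Finset (V ≃ Fin (Fintype.card V)))
    (arrCost G) ⟨Fintype.equivFin V, Finset.mem_univ _⟩
  obtain ⟨σ, hσmem, hσΦ⟩ := Finset.exists_min_image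
    (Finset.univ.filter fun τ => arrCost G τ = arrCost G σ0) (Stmt11.Phi G) ⟨σ0, by simp⟩
  rw [Finset.mem_filter] at hσmem
  have hopt : ∀ τ, arrCost G σ ≤ arrCost G τ := by
    intro τ; rw [hσmem.2]; exact hσ0 τ (Finset.mem_univ τ)
  have hΦmin : ∀ τ, arrCost G τ = arrCost G σ → Stmt11.Phi G σ ≤ Stmt11.Phi G τ := by
    intro τ h; exact hσΦ τ (Finset.mem_filter.mpr ⟨Finset.mem_univ τ, h.trans hσmem.2⟩)
  refine ⟨σ, hopt, ?_⟩
  intro u v w hu hv hw huv hvw hN hgap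
  set pu := (σ u : ℕ) with hpu
  set pv := (σ v : ℕ) with hpv
  set pw := (σ w : ℕ) with hpw
  have hpuv : pu < pv := Fin.lt_def.mp huv
  have hpvw : pv < pw := Fin.lt_def.mp hvw
  have hpuw : pu < pw := lt_trans hpuv hpvw
  have hpwn : pw < Fintype.card V := (σ w).isLt
  -- cover vertices lie strictly outside [pu, pw]
  have hout : ∀ c ∈ C, (σ c : ℕ) < pu ∨ pw < (σ c : ℕ) := by
    intro c hcC
    have hgc := hgap c hcC
    rw [Fin.lt_def, Fin.lt_def] at hgc
    have hcu : (σ c : ℕ) ≠ pu := fun h => hu (σ.injective (Fin.ext h) ▸ hcC)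
    have hcw : (σ c : ℕ) ≠ pw := fun h => hw (σ.injective (Fin.ext h) ▸ hcC)
    push_neg at hgc
    omega
  have hb : ∀ i : ℕ, pu + min i (pw - pu) < Fintype.card V := by intro i; omega
  set X : ℕ → V := fun i => σ.symm ⟨pu + min i (pw - pu), hb i⟩ with hX
  have hXval : ∀ i, i ≤ pw - pu → (σ (X i) : ℕ) = pu + i := by
    intro i hi
    rw [hX]
    simp only [Equiv.apply_symm_apply]
    omega
  have hX0 : X 0 = u := by
    apply σ.injective
    exact Fin.ext (by rw [hXval 0 (by omega)]; omega)
  have hXk : X (pw - pu) = w := by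
    apply σ.injective
    exact Fin.ext (by rw [hXval _ (le_refl _)]; omega)
  have hXv : X (pv - pu) = v := by
    apply σ.injective
    exact Fin.ext (by rw [hXval _ (by omega)]; omega)
  have hXC : ∀ i, i ≤ pw - pu → X i ∉ C := by
    intro i hi hmem
    have := hout (X i) hmem
    rw [hXval i hi] at this
    rcases this with h | h
    · omega
    · omega
  have hXne : ∀ i, i + 1 ≤ pw - pu → X i ≠ X (i + 1) := by
    intro i hi h
    have h1 := hXval i (by omega)
    have h2 := hXval (i + 1) hi
    rw [h] at h1
    omega
  have hXnadj : ∀ i, i + 1 ≤ pw - pu → ¬ G.Adj (X i) (X (i + 1)) := by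
    intro i hi hadj
    rcases hC _ _ hadj with h | h
    · exact hXC i (by omega) h
    · exact hXC (i + 1) hi h
  -- the "directional balance" of a vertex
  set g : V → ℤ := fun x =>
    ∑ c ∈ G.neighborFinset x, (if (σ c : ℕ) < pu then (1 : ℤ) else -1) with hg
  -- cost change of an adjacent swap
  have hstep : ∀ i, i + 1 ≤ pw - pu →
      arrCost G ((Equiv.swap (X i) (X (i + 1))).trans σ)
        = arrCost G σ + (g (X i) - g (X (i + 1))) := by
    intro i hi
    have ha := hXval i (by omega)
    have hb' := hXval (i + 1) hi
    rw [Stmt11.arrCost_swap G σ (hXne i hi) (hXnadj i hi)]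
    have hnbrC : ∀ y : ℕ, ∀ hy : y ≤ pw - pu, ∀ c ∈ G.neighborFinset (X y),
        (σ c : ℕ) < pu ∨ pw < (σ c : ℕ) := by
      intro y hy c hc
      apply hout
      rcases hC _ _ ((SimpleGraph.mem_neighborFinset G (X y) c).mp hc) with h | h
      · exact absurd h (hXC y hy)
      · exact h
    have hsum1 : ∑ c ∈ G.neighborFinset (X i),
        (|((σ (X (i+1)) : ℕ) : ℤ) - ((σ c : ℕ) : ℤ)| - |((σ (X i) : ℕ) : ℤ) - ((σ c : ℕ) : ℤ)|)
          = g (X i) := by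
      rw [hg]
      apply Finset.sum_congr rfl
      intro c hc
      have hz := hnbrC i (by omega) c hc
      have e1 : ((σ (X (i+1)) : ℕ) : ℤ) = ((σ (X i) : ℕ) : ℤ) + 1 := by
        rw [ha, hb']; push_cast; ring
      rw [e1, Stmt11.abs_step _ _ (by
        rcases hz with h | h
        · exact Or.inl (by omega)
        · exact Or.inr (by omega))]
      rcases hz with h | h
      · rw [if_pos (by omega : ((σ c:ℕ):ℤ) < ((σ (X i) : ℕ) : ℤ)), if_pos h]
      · rw [if_neg (by omega : ¬ ((σ c:ℕ):ℤ) < ((σ (X i) : ℕ) : ℤ)), if_neg (by omega)]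
    have hsum2 : ∑ c ∈ G.neighborFinset (X (i+1)),
        (|((σ (X i) : ℕ) : ℤ) - ((σ c : ℕ) : ℤ)| - |((σ (X (i+1)) : ℕ) : ℤ) - ((σ c : ℕ) : ℤ)|)
          = - g (X (i+1)) := by
      rw [hg, ← Finset.sum_neg_distrib]
      apply Finset.sum_congr rfl
      intro c hc
      have hz := hnbrC (i+1) hi c hc
      have e1 : ((σ (X (i+1)) : ℕ) : ℤ) = ((σ (X i) : ℕ) : ℤ) + 1 := by
        rw [ha, hb']; push_cast; ring
      have := Stmt11.abs_step ((σ (X i) : ℕ) : ℤ) ((σ c : ℕ) : ℤ)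
        (by
          rcases hz with h | h
          · exact Or.inl (by omega)
          · exact Or.inr (by omega))
      rw [e1]
      rw [show (|((σ (X i) : ℕ) : ℤ) - ((σ c : ℕ) : ℤ)| - |((σ (X i) : ℕ) : ℤ) + 1 - ((σ c : ℕ) : ℤ)|)
        = -(|((σ (X i) : ℕ) : ℤ) + 1 - ((σ c : ℕ) : ℤ)| - |((σ (X i) : ℕ) : ℤ) - ((σ c : ℕ) : ℤ)|) by ring,
        this]
      rcases hz with h | h
      · rw [if_pos (by omega : ((σ c:ℕ):ℤ) < ((σ (X i) : ℕ) : ℤ)), if_pos h]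
      · rw [if_neg (by omega : ¬ ((σ c:ℕ):ℤ) < ((σ (X i) : ℕ) : ℤ)), if_neg (by omega)]
    rw [hsum1, hsum2]
    ring
  -- neighborhoods of u and w agree as finsets
  have hNuw : G.neighborFinset u = G.neighborFinset w := by
    ext x
    rw [SimpleGraph.mem_neighborFinset, SimpleGraph.mem_neighborFinset,
      ← SimpleGraph.mem_neighborSet, ← SimpleGraph.mem_neighborSet, hN]
  -- each adjacent swap inside the gap is cost-neutral
  have hzero : ∀ i ∈ Finset.range (pw - pu), g (X i) - g (X (i + 1)) = 0 := by
    have hnn : ∀ i ∈ Finset.range (pw - pu), 0 ≤ g (X i) - g (X (i + 1)) := by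
      intro i hi
      rw [Finset.mem_range] at hi
      have h1 := hopt ((Equiv.swap (X i) (X (i + 1))).trans σ)
      rw [hstep i (by omega)] at h1
      linarith
    have htel : ∑ i ∈ Finset.range (pw - pu), (g (X i) - g (X (i + 1))) = 0 := by
      rw [Finset.sum_range_sub' (fun i => g (X i))]
      rw [hX0, hXk]
      have : g u = g w := by simp only [hg]; rw [hNuw]
      rw [this, sub_self]
    intro i hi
    exact (Finset.sum_eq_zero_iff_of_nonneg hnn).mp htel i hi
  -- Phi comparison: labels weakly decrease along the gap, and telescope to zero
  set tv : ℕ → ℤ := fun i => Stmt11.tval (G.neighborFinset (X i)) with htv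
  have htge : ∀ i ∈ Finset.range (pw - pu), 0 ≤ tv i - tv (i + 1) := by
    intro i hi
    rw [Finset.mem_range] at hi
    have hi' : i + 1 ≤ pw - pu := by omega
    have hcost : arrCost G ((Equiv.swap (X i) (X (i + 1))).trans σ) = arrCost G σ := by
      rw [hstep i hi', hzero i (Finset.mem_range.mpr hi), add_zero]
    have hPhile := hΦmin _ hcost
    rw [Stmt11.Phi_swap G σ (hXne i hi')] at hPhile
    have e1 : ((σ (X (i+1)) : ℕ) : ℤ) - ((σ (X i) : ℕ) : ℤ) = 1 := by
      rw [hXval i (by omega), hXval (i+1) hi']; push_cast; ring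
    rw [e1, one_mul] at hPhile
    simp only [htv]
    linarith
  have htzero : ∀ i ∈ Finset.range (pw - pu), tv i - tv (i + 1) = 0 := by
    have htel : ∑ i ∈ Finset.range (pw - pu), (tv i - tv (i + 1)) = 0 := by
      rw [Finset.sum_range_sub' tv]
      simp only [htv]
      rw [hX0, hXk, hNuw, sub_self]
    intro i hi
    exact (Finset.sum_eq_zero_iff_of_nonneg htge).mp htel i hi
  have hNstep : ∀ i, i + 1 ≤ pw - pu →
      G.neighborFinset (X (i + 1)) = G.neighborFinset (X i) := by
    intro i hi
    have := htzero i (Finset.mem_range.mpr (by omega))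
    simp only [htv] at this
    exact (Stmt11.tval_injective (by linarith)).symm
  have hNall : ∀ i, i ≤ pw - pu → G.neighborFinset (X i) = G.neighborFinset u := by
    intro i
    induction i with
    | zero => intro _; rw [hX0]
    | succ j ih =>
      intro hj
      rw [hNstep j hj, ih (by omega)]
  have hfin : G.neighborFinset v = G.neighborFinset u := by
    rw [← hXv]
    exact hNall (pv - pu) (by omega)
  ext x
  rw [SimpleGraph.mem_neighborSet, SimpleGraph.mem_neighborSet,
    ← SimpleGraph.mem_neighborFinset, ← SimpleGraph.mem_neighborFinset, hfin]
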